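/- Assume the Setup (Section 7.2), let Q^x = xQx⁻¹, and suppose Z ⊆ α intersects both A and x • β. Then: (a) if g ∈ P ∩ Q^x then |A|*_{g•Z} = |x • β|*_{g•Z} = 1 and |α|*_{g•Z} = |x • B|*_{g•Z} = 0; (b) if g ∈ P ∖ Q^x then |A|*_{g•Z} = 1 and |x • B|*_{g•Z} = |α|*_{g•Z} = 0; (c) if g ∈ Q^x ∖ P then |A|*_{g•Z} = |x • B|*_{g•Z} = |α|*_{g•Z} = 0 and |x • β|*_{g•Z} = 1; (d) if g ∈ G ∖ (P ∪ Q^x) then |A|*_{g•Z} = |α|*_{g•Z} = 0 and |x • B|*_{g•Z} ≤ |x • β|*_{g•Z}. -/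
import Mathlib


open Pointwise

open scoped Classical in
/-- `sep X Z` is the indicator `|X|*_Z`: it is `1` if `X` separates `Z`
(i.e. `Z` meets both `X` and its complement) and `0` otherwise. -/
noncomputable def sep {E : Type*} (X Z : Set E) : ℕ :=
  if (Z ∩ X).Nonempty ∧ (Z ∩ Xᶜ).Nonempty then 1 else 0

lemma sep_eq_one' {E : Type*} {X Z : Set E}
    (h1 : (Z ∩ X).Nonempty) (h2 : (Z ∩ Xᶜ).Nonempty) : sep X Z = 1 := by
  simp [sep, h1, h2]

lemma sep_le_one' {E : Type*} (X Z : Set E) : sep X Z ≤ 1 := by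
  unfold sep; split <;> simp

lemma sep_eq_zero' {E : Type*} {X Z : Set E}
    (h : ¬((Z ∩ X).Nonempty ∧ (Z ∩ Xᶜ).Nonempty)) : sep X Z = 0 := by
  simp only [sep, if_neg h]

/-- Lemma 7.8: Setup (Section 7.2), `Q^x = xQx⁻¹`, and `Z ⊆ α` meeting both
`A` and `x • β`.  Conclusions (a)–(d). -/
theorem stmt_9 {G E : Type*} [Group G] [MulAction G E]
    (α β : Set E)
    (hedgeα : ∀ y : G, (α ∩ y • α).Nonempty → y • α = α)
    (hedgeβ : ∀ y : G, (β ∩ y • β).Nonempty → y • β = β)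
    (P Q : Subgroup G)
    (hP : P = MulAction.stabilizer G α)
    (hQ : Q = MulAction.stabilizer G β)
    (x : G)
    (γ γ' A B : Set E)
    (hγ : γ = ⋃ g ∈ P, g • (α ∩ x • β))
    (hγ' : γ' = ⋃ g ∈ Q, g • (β ∩ x⁻¹ • α))
    (hA : A = α \ γ) (hB : B = β \ γ')
    (Qx : Set G) (hQx : Qx = (fun q => x * q * x⁻¹) '' (Q : Set G))
    (Z : Set E) (hZ : Z ⊆ α)
    (hZA : (Z ∩ A).Nonempty) (hZβ : (Z ∩ x • β).Nonempty) :
    (∀ g : G, g ∈ P → g ∈ Qx →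
      sep A (g • Z) = 1 ∧ sep (x • β) (g • Z) = 1 ∧
      sep α (g • Z) = 0 ∧ sep (x • B) (g • Z) = 0) ∧
    (∀ g : G, g ∈ P → g ∉ Qx →
      sep A (g • Z) = 1 ∧ sep (x • B) (g • Z) = 0 ∧ sep α (g • Z) = 0) ∧
    (∀ g : G, g ∈ Qx → g ∉ P →
      sep A (g • Z) = 0 ∧ sep (x • B) (g • Z) = 0 ∧
      sep α (g • Z) = 0 ∧ sep (x • β) (g • Z) = 1) ∧
    (∀ g : G, g ∉ P → g ∉ Qx →
      sep A (g • Z) = 0 ∧ sep α (g • Z) = 0 ∧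
      sep (x • B) (g • Z) ≤ sep (x • β) (g • Z)) := by
  -- basic stabilizer facts
  have hPα : ∀ g ∈ P, g • α = α := by
    intro g hg; rw [hP, MulAction.mem_stabilizer_iff] at hg; exact hg
  have hQβ : ∀ q ∈ Q, q • β = β := by
    intro q hq; rw [hQ, MulAction.mem_stabilizer_iff] at hq; exact hq
  -- γ is P-invariant
  have hγP : ∀ g ∈ P, g • γ = γ := by
    intro g hg
    ext e
    simp only [Set.mem_smul_set_iff_inv_smul_mem, hγ, Set.mem_iUnion, exists_prop]
    constructor
    · rintro ⟨p, hp, hpe⟩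
      refine ⟨g * p, mul_mem hg hp, ?_⟩
      rwa [mul_inv_rev, mul_smul]
    · rintro ⟨p, hp, hpe⟩
      refine ⟨g⁻¹ * p, mul_mem (inv_mem hg) hp, ?_⟩
      rwa [mul_inv_rev, inv_inv, mul_smul, smul_inv_smul]
  -- γ' is Q-invariant
  have hγ'Q : ∀ q ∈ Q, q • γ' = γ' := by
    intro g hg
    ext e
    simp only [Set.mem_smul_set_iff_inv_smul_mem, hγ', Set.mem_iUnion, exists_prop]
    constructor
    · rintro ⟨p, hp, hpe⟩
      refine ⟨g * p, mul_mem hg hp, ?_⟩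
      rwa [mul_inv_rev, mul_smul]
    · rintro ⟨p, hp, hpe⟩
      refine ⟨g⁻¹ * p, mul_mem (inv_mem hg) hp, ?_⟩
      rwa [mul_inv_rev, inv_inv, mul_smul, smul_inv_smul]
  -- A is P-invariant
  have hAP : ∀ g ∈ P, g • A = A := by
    intro g hg
    rw [hA, Set.smul_set_sdiff, hPα g hg, hγP g hg]
  -- elements of Qx
  have hQxmem : ∀ g ∈ Qx, ∃ q ∈ Q, g = x * q * x⁻¹ := by
    intro g hg
    rw [hQx] at hg
    obtain ⟨q, hq, rfl⟩ := hg
    exact ⟨q, hq, rfl⟩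
  have hQxinv : ∀ g ∈ Qx, g⁻¹ ∈ Qx := by
    intro g hg
    obtain ⟨q, hq, rfl⟩ := hQxmem g hg
    rw [hQx]
    exact ⟨q⁻¹, inv_mem hq, by group⟩
  -- x•β is Qx-invariant
  have hxβQx : ∀ g ∈ Qx, g • (x • β) = x • β := by
    intro g hg
    obtain ⟨q, hq, rfl⟩ := hQxmem g hg
    rw [smul_smul]
    have : x * q * x⁻¹ * x = x * q := by group
    rw [this, ← smul_smul, hQβ q hq]
  -- x•γ' is Qx-invariant
  have hxγ'Qx : ∀ g ∈ Qx, g • (x • γ') = x • γ' := by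
    intro g hg
    obtain ⟨q, hq, rfl⟩ := hQxmem g hg
    rw [smul_smul]
    have : x * q * x⁻¹ * x = x * q := by group
    rw [this, ← smul_smul, hγ'Q q hq]
  have hxB : x • B = (x • β) \ (x • γ') := by
    rw [hB, Set.smul_set_sdiff]
  have hxBQx : ∀ g ∈ Qx, g • (x • B) = x • B := by
    intro g hg
    rw [hxB, Set.smul_set_sdiff, hxβQx g hg, hxγ'Qx g hg]
  -- α ∩ x•β ⊆ γ
  have hαxβγ : α ∩ x • β ⊆ γ := by
    intro e he
    rw [hγ]
    refine Set.mem_iUnion₂.2 ⟨1, one_mem P, ?_⟩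
    simpa using he
  -- x•β ∩ α ⊆ x•γ'
  have hxβαγ' : ∀ e, e ∈ x • β → e ∈ α → e ∈ x • γ' := by
    intro e h1 h2
    rw [Set.mem_smul_set_iff_inv_smul_mem] at h1 ⊢
    rw [hγ']
    refine Set.mem_iUnion₂.2 ⟨1, one_mem Q, ?_⟩
    simp only [one_smul]
    exact ⟨h1, by rwa [Set.mem_smul_set_iff_inv_smul_mem, inv_inv, smul_inv_smul]⟩
  -- A and x•β are disjoint
  have hAxβ : ∀ e, e ∈ A → e ∉ x • β := by
    intro e heA hexβ
    rw [hA] at heA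
    exact heA.2 (hαxβγ ⟨heA.1, hexβ⟩)
  -- x•B and α are disjoint
  have hxBα : ∀ e, e ∈ x • B → e ∉ α := by
    intro e he heα
    rw [hxB] at he
    exact he.2 (hxβαγ' e he.1 heα)
  -- outside P, translates of α are disjoint from α
  have hgα : ∀ g : G, g ∉ P → ∀ e ∈ α, g • e ∉ α := by
    intro g hg e he hge
    apply hg
    rw [hP, MulAction.mem_stabilizer_iff]
    exact hedgeα g ⟨g • e, hge, Set.smul_mem_smul_set he⟩
  -- outside Qx, translates of x•β are disjoint from x•β
  have hgxβ : ∀ g : G, g ∉ Qx → ∀ e ∈ x • β, g • e ∉ x • β := by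
    intro g hg e he hge
    apply hg
    have hy : (x⁻¹ * g * x) • β = β := by
      apply hedgeβ
      refine ⟨x⁻¹ • (g • e), ?_, ?_⟩
      · rwa [← Set.mem_smul_set_iff_inv_smul_mem]
      · rw [Set.mem_smul_set_iff_inv_smul_mem] at he
        have : (x⁻¹ * g * x)⁻¹ • (x⁻¹ • (g • e)) = x⁻¹ • e := by
          simp only [← mul_smul]
          congr 1
          group
        rw [Set.mem_smul_set_iff_inv_smul_mem, this]
        exact he
    have hyQ : x⁻¹ * g * x ∈ Q := by
      rw [hQ, MulAction.mem_stabilizer_iff]; exact hy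
    rw [hQx]
    exact ⟨x⁻¹ * g * x, hyQ, by group⟩
  obtain ⟨z₁, hz₁⟩ := hZA
  obtain ⟨z₂, hz₂⟩ := hZβ
  have hz₁Z : z₁ ∈ Z := hz₁.1
  have hz₁A : z₁ ∈ A := hz₁.2
  have hz₂Z : z₂ ∈ Z := hz₂.1
  have hz₂β : z₂ ∈ x • β := hz₂.2
  have hz₂α : z₂ ∈ α := hZ hz₂Z
  -- sep A = 1 for g ∈ P
  have sepA1 : ∀ g ∈ P, sep A (g • Z) = 1 := by
    intro g hg
    apply sep_eq_one'
    · refine ⟨g • z₁, Set.smul_mem_smul_set hz₁Z, ?_⟩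
      rw [← hAP g hg]; exact Set.smul_mem_smul_set hz₁A
    · refine ⟨g • z₂, Set.smul_mem_smul_set hz₂Z, ?_⟩
      intro hc
      rw [← hAP g hg, Set.smul_mem_smul_set_iff] at hc
      exact hAxβ z₂ hc hz₂β
  -- sep α = 0 for g ∈ P
  have sepα0 : ∀ g ∈ P, sep α (g • Z) = 0 := by
    intro g hg
    apply sep_eq_zero'
    rintro ⟨-, e, heZ, heα⟩
    obtain ⟨z, hz, rfl⟩ := heZ
    apply heα
    rw [← hPα g hg]
    exact Set.smul_mem_smul_set (hZ hz)
  -- sep x•B = 0 for g ∈ P  (g•Z ⊆ α, disjoint from x•B)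
  have sepxB0P : ∀ g ∈ P, sep (x • B) (g • Z) = 0 := by
    intro g hg
    apply sep_eq_zero'
    rintro ⟨⟨e, heZ, heB⟩, -⟩
    obtain ⟨z, hz, rfl⟩ := heZ
    apply hxBα _ heB
    rw [← hPα g hg]
    exact Set.smul_mem_smul_set (hZ hz)
  -- sep x•β = 1 for g ∈ Qx
  have sepxβ1 : ∀ g ∈ Qx, sep (x • β) (g • Z) = 1 := by
    intro g hg
    apply sep_eq_one'
    · refine ⟨g • z₂, Set.smul_mem_smul_set hz₂Z, ?_⟩
      rw [← hxβQx g hg]; exact Set.smul_mem_smul_set hz₂β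
    · refine ⟨g • z₁, Set.smul_mem_smul_set hz₁Z, ?_⟩
      intro hc
      rw [← hxβQx g hg, Set.smul_mem_smul_set_iff] at hc
      exact hAxβ z₁ hz₁A hc
  -- sep x•B = 0 for g ∈ Qx
  have sepxB0Qx : ∀ g ∈ Qx, sep (x • B) (g • Z) = 0 := by
    intro g hg
    apply sep_eq_zero'
    rintro ⟨⟨e, heZ, heB⟩, -⟩
    obtain ⟨z, hz, rfl⟩ := heZ
    rw [← hxBQx g hg, Set.smul_mem_smul_set_iff] at heB
    exact hxBα z heB (hZ hz)
  -- sep α = 0 and sep A = 0 for g ∉ P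
  have sepα0' : ∀ g : G, g ∉ P → sep α (g • Z) = 0 := by
    intro g hg
    apply sep_eq_zero'
    rintro ⟨⟨e, heZ, heα⟩, -⟩
    obtain ⟨z, hz, rfl⟩ := heZ
    exact hgα g hg z (hZ hz) heα
  have sepA0' : ∀ g : G, g ∉ P → sep A (g • Z) = 0 := by
    intro g hg
    apply sep_eq_zero'
    rintro ⟨⟨e, heZ, heA⟩, -⟩
    obtain ⟨z, hz, rfl⟩ := heZ
    have : g • z ∈ α := by rw [hA] at heA; exact heA.1
    exact hgα g hg z (hZ hz) this
  refine ⟨?_, ?_, ?_, ?_⟩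
  · intro g hgP hgQx
    exact ⟨sepA1 g hgP, sepxβ1 g hgQx, sepα0 g hgP, sepxB0P g hgP⟩
  · intro g hgP hgQx
    exact ⟨sepA1 g hgP, sepxB0P g hgP, sepα0 g hgP⟩
  · intro g hgQx hgP
    exact ⟨sepA0' g hgP, sepxB0Qx g hgQx, sepα0' g hgP, sepxβ1 g hgQx⟩
  · intro g hgP hgQx
    refine ⟨sepA0' g hgP, sepα0' g hgP, ?_⟩
    -- if g•Z separates x•B, it separates x•β
    by_cases h : ((g • Z) ∩ (x • B)).Nonempty ∧ ((g • Z) ∩ (x • B)ᶜ).Nonempty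
    · have h1 : ((g • Z) ∩ (x • β)).Nonempty := by
        obtain ⟨e, heZ, heB⟩ := h.1
        refine ⟨e, heZ, ?_⟩
        rw [hxB] at heB
        exact heB.1
      have h2 : ((g • Z) ∩ (x • β)ᶜ).Nonempty := by
        refine ⟨g • z₂, Set.smul_mem_smul_set hz₂Z, ?_⟩
        exact hgxβ g hgQx z₂ hz₂β
      rw [sep_eq_one' h1 h2]
      exact sep_le_one' _ _
    · rw [sep_eq_zero' h]
      exact Nat.zero_le _
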